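/- For integers m ≥ 1 and n > 1, and any prime p > n, let g(t) = 1 + t^m + t^{2m} + ⋯ + t^{(n−1)m} and X = 𝔽_p[t]/(g(t)) with Alexander quandle operation x*y = t·x + (1−t)·y. Then 1−t is invertible in the ring X (since g(1) = n ≢ 0 mod p), and X satisfies the identity x*(y₁*⋯*y_m repeated n times) = x for all x, y₁,…,y_m ∈ X. -/

import Mathlib

open Polynomial

/-- The polynomial `g(t) = 1 + t^m + ⋯ + t^{(n−1)m}` over `𝔽_p`. -/
noncomputable def burnsidePoly (p m n : ℕ) : Polynomial (ZMod p) :=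
  ∑ h ∈ Finset.range n, Polynomial.X ^ (h * m)

/-- The quotient ring `X = 𝔽_p[t]/(g(t))`. -/
abbrev burnsideRing (p m n : ℕ) :=
  Polynomial (ZMod p) ⧸ Ideal.span {burnsidePoly p m n}

/-- The image of `t` in `X`. -/
noncomputable def burnsideT (p m n : ℕ) : burnsideRing p m n :=
  Ideal.Quotient.mk _ Polynomial.X

/-- The Alexander quandle operation `x*y = t·x + (1−t)·y` on `X`. -/
noncomputable def burnsideOp (p m n : ℕ) (x y : burnsideRing p m n) :
    burnsideRing p m n :=
  burnsideT p m n * x + (1 - burnsideT p m n) * y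

lemma burnside_foldl_eq (p m n : ℕ) (l : List (burnsideRing p m n))
    (x : burnsideRing p m n) :
    l.foldl (burnsideOp p m n) x =
      burnsideT p m n ^ l.length * x + l.foldl (burnsideOp p m n) 0 := by
  induction l generalizing x with
  | nil => simp
  | cons y l ih =>
    simp only [List.foldl_cons, List.length_cons]
    rw [ih (burnsideOp p m n x y), ih (burnsideOp p m n 0 y)]
    simp only [burnsideOp]
    ring

lemma burnside_foldl_replicate (p m n k : ℕ) (B : List (burnsideRing p m n))
    (x : burnsideRing p m n) :
    (List.flatten (List.replicate k B)).foldl (burnsideOp p m n) x =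
      burnsideT p m n ^ (k * B.length) * x +
        (∑ h ∈ Finset.range k, burnsideT p m n ^ (h * B.length)) *
          B.foldl (burnsideOp p m n) 0 := by
  induction k generalizing x with
  | zero => simp
  | succ k ih =>
    rw [List.replicate_succ, List.flatten_cons, List.foldl_append, ih,
      burnside_foldl_eq p m n B x, Finset.sum_range_succ, Nat.succ_mul, pow_add]
    ring

theorem burnside_identity_family (m n p : ℕ) (hm : 1 ≤ m) (hn : 1 < n)
    (hp : p.Prime) (hpn : n < p) :
    IsUnit (1 - burnsideT p m n) ∧
    ∀ (x : burnsideRing p m n) (y : Fin m → burnsideRing p m n),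
      (List.flatten (List.replicate n (List.ofFn y))).foldl
        (burnsideOp p m n) x = x := by
  have hg1 : (burnsidePoly p m n).eval 1 = (n : ZMod p) := by
    simp [burnsidePoly, Polynomial.eval_finset_sum]
  haveI : Fact p.Prime := ⟨hp⟩
  have hne : (n : ZMod p) ≠ 0 := by
    rw [Ne, ZMod.natCast_eq_zero_iff]
    exact fun h => absurd (Nat.le_of_dvd (by omega) h) (by omega)
  have hgmem : burnsidePoly p m n ∈ Ideal.span {burnsidePoly p m n} :=
    Ideal.mem_span_singleton_self _
  have hg0 : (Ideal.Quotient.mk (Ideal.span {burnsidePoly p m n}))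
      (burnsidePoly p m n) = 0 := Ideal.Quotient.eq_zero_iff_mem.mpr hgmem
  constructor
  · -- 1 - t is a unit
    have hc : IsCoprime (X - C (1 : ZMod p)) (burnsidePoly p m n) := by
      rw [(Polynomial.irreducible_X_sub_C (1 : ZMod p)).coprime_iff_not_dvd,
        Polynomial.dvd_iff_isRoot, Polynomial.IsRoot, hg1]
      exact hne
    obtain ⟨a, b, hab⟩ := hc
    refine IsUnit.of_mul_eq_one (-(Ideal.Quotient.mk _ a)) ?_
    have h1 : (Ideal.Quotient.mk (Ideal.span {burnsidePoly p m n}))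
        (a * (X - C 1) + b * burnsidePoly p m n) = 1 := by rw [hab]; simp
    rw [map_add, map_mul, map_mul, hg0, mul_zero, add_zero, map_sub] at h1
    have h2 : (Ideal.Quotient.mk (Ideal.span {burnsidePoly p m n})) a *
        (burnsideT p m n - 1) = 1 := by
      simpa [burnsideT] using h1
    linear_combination h2
  · intro x y
    rw [burnside_foldl_replicate, List.length_ofFn]
    have hT : ∀ k : ℕ, burnsideT p m n ^ k =
        Ideal.Quotient.mk (Ideal.span {burnsidePoly p m n}) (X ^ k) := by
      intro k; simp [burnsideT]
    have hsum : (∑ h ∈ Finset.range n, burnsideT p m n ^ (h * m)) = 0 := by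
      simp only [hT]
      rw [← map_sum]
      exact hg0
    have hpow : burnsideT p m n ^ (n * m) = 1 := by
      rw [hT]
      have hgeo := geom_sum_mul ((X : Polynomial (ZMod p)) ^ m) n
      simp only [← pow_mul] at hgeo
      have hdecomp : (X : Polynomial (ZMod p)) ^ (n * m) - 1 =
          burnsidePoly p m n * (X ^ m - 1) := by
        rw [mul_comm n m, ← hgeo, burnsidePoly]
        congr 1
        exact Finset.sum_congr rfl fun h _ => by rw [mul_comm h m]
      have hmem : (X : Polynomial (ZMod p)) ^ (n * m) - 1 ∈
          Ideal.span {burnsidePoly p m n} :=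
        hdecomp ▸ Ideal.mul_mem_right _ _ hgmem
      have := Ideal.Quotient.eq.mpr hmem
      simpa using this
    rw [hsum, hpow]
    simp
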